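/- Let e_var, e_ter : ℝⁿ → ℝ be continuously differentiable, and let x : [0,∞) → ℝⁿ solve x' = f(x) for a locally Lipschitz f with global solutions. Suppose at t = 0: e_var(x(0)) ≥ 0 and e_ter(x(0)) < 0; and whenever e_var(x(t)) ≥ 0 along the trajectory, the derivatives satisfy d/dt[e_var(x(t))] ≤ e_ter(x(t)) and d/dt[e_ter(x(t))] ≤ 0. Then there exists T ∈ [0, −e_var(x(0))/e_ter(x(0))] such that e_var(x(T)) = 0 and e_var(x(t)) > 0 for all t < T with e_var(x(0)) > 0 (or T = 0 if e_var(x(0)) = 0), and e_var(x(t)) ≥ 0 for all t ∈ [0, T]. -/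

import Mathlib

open Topology Filter


/-- Steps 2–4 of the soundness proof of the (DWh) rule, combined: along a global
solution `x` of `x' = f(x)` (with `f` locally Lipschitz and `e_var, e_ter` C¹),
if initially `e_var(x 0) ≥ 0` and `e_ter(x 0) < 0`, and wherever `e_var ≥ 0` along
the trajectory the derivative of `e_var ∘ x` is bounded by `e_ter ∘ x` and the
derivative of `e_ter ∘ x` is nonpositive, then `e_var ∘ x` reaches exactly `0` at
some first time `T ≤ −e_var(x 0)/e_ter(x 0)`, staying positive before `T`
(whenever it is initially positive) and nonnegative up to `T`. -/
theorem stmt19 {n : ℕ}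
    (evar eter : (Fin n → ℝ) → ℝ) (f : (Fin n → ℝ) → (Fin n → ℝ))
    (x : ℝ → (Fin n → ℝ))
    (hevar : ContDiff ℝ 1 evar) (heter : ContDiff ℝ 1 eter)
    (hf : LocallyLipschitz f)
    (hx : ∀ t, 0 ≤ t → HasDerivAt x (f (x t)) t)
    (h0var : 0 ≤ evar (x 0)) (h0ter : eter (x 0) < 0)
    (hvar : ∀ t, 0 ≤ t → 0 ≤ evar (x t) →
      deriv (fun s => evar (x s)) t ≤ eter (x t))
    (hter : ∀ t, 0 ≤ t → 0 ≤ evar (x t) →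
      deriv (fun s => eter (x s)) t ≤ 0) :
    ∃ T, 0 ≤ T ∧ T ≤ -(evar (x 0)) / eter (x 0) ∧
      evar (x T) = 0 ∧
      (0 < evar (x 0) → ∀ t, 0 ≤ t → t < T → 0 < evar (x t)) ∧
      (evar (x 0) = 0 → T = 0) ∧
      (∀ t, 0 ≤ t → t ≤ T → 0 ≤ evar (x t)) := by
  classical
  set V : ℝ → ℝ := fun t => evar (x t) with hVdef
  set E : ℝ → ℝ := fun t => eter (x t) with hEdef
  have hVd : ∀ t, 0 ≤ t → HasDerivAt V ((fderiv ℝ evar (x t)) (f (x t))) t := by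
    intro t ht
    exact ((hevar.differentiable one_ne_zero).differentiableAt.hasFDerivAt).comp_hasDerivAt t (hx t ht)
  have hEd : ∀ t, 0 ≤ t → HasDerivAt E ((fderiv ℝ eter (x t)) (f (x t))) t := by
    intro t ht
    exact ((heter.differentiable one_ne_zero).differentiableAt.hasFDerivAt).comp_hasDerivAt t (hx t ht)
  have hVcont : ContinuousOn V (Set.Ici 0) :=
    fun t ht => ((hVd t ht).continuousAt).continuousWithinAt
  have hEcont : ContinuousOn E (Set.Ici 0) :=
    fun t ht => ((hEd t ht).continuousAt).continuousWithinAt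
  -- key estimate
  have key : ∀ t, 0 ≤ t → (∀ s ∈ Set.Icc (0:ℝ) t, 0 ≤ V s) →
      V t ≤ V 0 + E 0 * t := by
    intro t ht hpos
    have hEanti : AntitoneOn E (Set.Icc 0 t) := by
      apply antitoneOn_of_deriv_nonpos (convex_Icc 0 t)
      · exact hEcont.mono (Set.Icc_subset_Ici_self)
      · intro s hs
        rw [interior_Icc] at hs
        exact (hEd s hs.1.le).differentiableAt.differentiableWithinAt
      · intro s hs
        rw [interior_Icc] at hs
        exact hter s hs.1.le (hpos s ⟨hs.1.le, hs.2.le⟩)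
    have hh : AntitoneOn (fun s => V s - E 0 * s) (Set.Icc 0 t) := by
      apply antitoneOn_of_deriv_nonpos (convex_Icc 0 t)
      · exact (hVcont.mono Set.Icc_subset_Ici_self).sub
          ((continuous_const.mul continuous_id).continuousOn)
      · intro s hs
        rw [interior_Icc] at hs
        exact ((hVd s hs.1.le).sub ((hasDerivAt_id' s).const_mul (E 0))).differentiableAt.differentiableWithinAt
      · intro s hs
        rw [interior_Icc] at hs
        have hds : HasDerivAt (fun s => V s - E 0 * s)
            ((fderiv ℝ evar (x s)) (f (x s)) - E 0 * 1) s :=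
          (hVd s hs.1.le).sub ((hasDerivAt_id' s).const_mul (E 0))
        have h1 : deriv (fun s => V s - E 0 * s) s =
            (fderiv ℝ evar (x s)) (f (x s)) - E 0 * 1 := hds.deriv
        have h2 : deriv V s = (fderiv ℝ evar (x s)) (f (x s)) := (hVd s hs.1.le).deriv
        have h3 : deriv V s ≤ E s := hvar s hs.1.le (hpos s ⟨hs.1.le, hs.2.le⟩)
        have h4 : E s ≤ E 0 := hEanti ⟨le_rfl, ht⟩ ⟨hs.1.le, hs.2.le⟩ hs.1.le
        rw [h1]
        rw [h2] at h3
        linarith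
    have := hh ⟨le_rfl, ht⟩ ⟨ht, le_rfl⟩ ht
    simp only [mul_zero, sub_zero] at this
    linarith
  set T0 : ℝ := -(V 0) / E 0 with hT0def
  have hE0ne : E 0 ≠ 0 := ne_of_lt h0ter
  have hT0nonneg : 0 ≤ T0 := by
    rw [hT0def, div_nonneg_iff]
    right
    exact ⟨neg_nonpos.mpr h0var, h0ter.le⟩
  have hT0val : V 0 + E 0 * T0 = 0 := by
    rw [hT0def]
    field_simp
    ring
  -- the set of times where V ≤ 0
  set S : Set ℝ := Set.Ici 0 ∩ V ⁻¹' Set.Iic 0 with hSdef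
  have hSclosed : IsClosed S :=
    hVcont.preimage_isClosed_of_isClosed isClosed_Ici isClosed_Iic
  have hSmem : ∃ t ∈ S, t ≤ T0 := by
    by_contra hcon
    push_neg at hcon
    have hpos : ∀ s ∈ Set.Icc (0:ℝ) T0, 0 ≤ V s := by
      intro s hs
      by_contra hneg
      push_neg at hneg
      exact absurd (hcon s ⟨hs.1, hneg.le⟩) (not_lt.mpr hs.2)
    have := key T0 hT0nonneg hpos
    have hVT0 : V T0 ≤ 0 := by linarith
    exact absurd (hcon T0 ⟨hT0nonneg, hVT0⟩) (not_lt.mpr le_rfl)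
  obtain ⟨t1, ht1S, ht1le⟩ := hSmem
  have hSne : S.Nonempty := ⟨t1, ht1S⟩
  have hSbdd : BddBelow S := ⟨0, fun s hs => hs.1⟩
  set T : ℝ := sInf S with hTdef
  have hTS : T ∈ S := hSclosed.csInf_mem hSne hSbdd
  have hT0 : 0 ≤ T := hTS.1
  have hTle : T ≤ T0 := le_trans (csInf_le hSbdd ht1S) ht1le
  have hTneg : V T ≤ 0 := hTS.2
  have hbefore : ∀ t, 0 ≤ t → t < T → 0 < V t := by
    intro t ht htT
    by_contra h
    push_neg at h
    exact absurd (csInf_le hSbdd ⟨ht, h⟩) (not_le.mpr htT)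
  have hVTnonneg : 0 ≤ V T := by
    rcases eq_or_lt_of_le hT0 with h | h
    · rw [← h]; exact h0var
    · have hne : (𝓝[Set.Ico (0:ℝ) T] T).NeBot := by
        apply mem_closure_iff_nhdsWithin_neBot.mp
        rw [closure_Ico (ne_of_lt h)]
        exact ⟨hT0, le_rfl⟩
      have htend : Filter.Tendsto V (𝓝[Set.Ico (0:ℝ) T] T) (𝓝 (V T)) :=
        (hVcont T hT0).mono_left
          (nhdsWithin_mono T (fun s hs => hs.1))
      refine ge_of_tendsto htend ?_
      filter_upwards [self_mem_nhdsWithin] with s hs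
      exact (hbefore s hs.1 hs.2).le
  have hVT : V T = 0 := le_antisymm hTneg hVTnonneg
  refine ⟨T, hT0, hTle, hVT, fun _ => hbefore, ?_, ?_⟩
  · intro h0
    have h0' : (0:ℝ) ∈ S := Set.mem_inter Set.self_mem_Ici
      (by simp only [Set.mem_preimage, Set.mem_Iic]; exact le_of_eq h0)
    have : T ≤ 0 := csInf_le hSbdd h0'
    linarith
  · intro t ht htT
    rcases eq_or_lt_of_le htT with h | h
    · rw [h]; exact hVT.ge
    · exact (hbefore t ht h).le
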